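/- Let G be a finite group generated by two subnormal supersoluble subgroups A and B, and let p be the largest prime dividing |G|. If A_p and B_p are Sylow p-subgroups of A and B respectively, then the subgroup generated by A_p and B_p is contained in O_p(G). -/

import Mathlib

/-- A subgroup `H` of `G` is subnormal if there is a chain
`H = c 0 ≤ c 1 ≤ ... ≤ c n = G` with each term normal in the next. -/
def Subgroup.IsSubnormal' {G : Type*} [Group G] (H : Subgroup G) : Prop :=
  ∃ (n : ℕ) (c : Fin (n + 1) → Subgroup G),
    c 0 = H ∧ c (Fin.last n) = ⊤ ∧
    ∀ i : Fin n, c i.castSucc ≤ c i.succ ∧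
      ((c i.castSucc).subgroupOf (c i.succ)).Normal

/-- A group is supersoluble if it has a normal series (all terms normal in `G`)
with cyclic factors; the factor `c (i+1) / c i` being cyclic is expressed as
`c (i+1)` being generated by `c i` together with a single element. -/
def IsSupersolvable (G : Type*) [Group G] : Prop :=
  ∃ (n : ℕ) (c : Fin (n + 1) → Subgroup G),
    c 0 = ⊥ ∧ c (Fin.last n) = ⊤ ∧
    (∀ i, (c i).Normal) ∧
    ∀ i : Fin n, c i.castSucc ≤ c i.succ ∧
      ∃ g ∈ c i.succ, c i.succ ≤ c i.castSucc ⊔ Subgroup.zpowers g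

/-- The Fitting subgroup: the join of all normal nilpotent subgroups
(in a finite group, the largest normal nilpotent subgroup). -/
def fittingSubgroup (G : Type*) [Group G] : Subgroup G :=
  sSup {N : Subgroup G | N.Normal ∧ Group.IsNilpotent N}

instance fittingSubgroup_normal (G : Type*) [Group G] : (fittingSubgroup G).Normal := by
  constructor
  intro x hx g
  rw [fittingSubgroup, sSup_eq_iSup'] at hx ⊢
  refine Subgroup.iSup_induction
    (C := fun y => g * y * g⁻¹ ∈
      ⨆ (N : {N : Subgroup G // N.Normal ∧ Group.IsNilpotent N}), (N : Subgroup G))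
    _ hx (fun N y hy => ?_) (by simpa using Subgroup.one_mem _) (fun y z hy hz => ?_)
  · exact Subgroup.mem_iSup_of_mem N (N.2.1.conj_mem y hy g)
  · simpa [mul_assoc] using Subgroup.mul_mem _ hy hz

/-- `O_p(G)`: the join of all normal `p`-subgroups
(in a finite group, the largest normal `p`-subgroup). -/
def pCore (p : ℕ) (G : Type*) [Group G] : Subgroup G :=
  sSup {N : Subgroup G | N.Normal ∧ IsPGroup p N}

instance pCore_normal (p : ℕ) (G : Type*) [Group G] : (pCore p G).Normal := by
  constructor
  intro x hx g
  rw [pCore, sSup_eq_iSup'] at hx ⊢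
  refine Subgroup.iSup_induction
    (C := fun y => g * y * g⁻¹ ∈
      ⨆ (N : {N : Subgroup G // N.Normal ∧ IsPGroup p N}), (N : Subgroup G))
    _ hx (fun N y hy => ?_) (by simpa using Subgroup.one_mem _) (fun y z hy hz => ?_)
  · exact Subgroup.mem_iSup_of_mem N (N.2.1.conj_mem y hy g)
  · simpa [mul_assoc] using Subgroup.mul_mem _ hy hz

/-- `G` has a Sylow tower of supersoluble type: a normal series `⊥ = c 0 ≤ ... ≤ c n = ⊤`
(all terms normal in `G`) together with strictly decreasing primes `p 0 > p 1 > ... `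
exhausting the primes dividing `|G|`, such that each factor `c (i+1) / c i` is a
Sylow `p i`-subgroup of `G / c i` (i.e. has order the full `p i`-part of `|G|`). -/
def HasSupersolubleSylowTower (G : Type*) [Group G] : Prop :=
  ∃ (n : ℕ) (c : Fin (n + 1) → Subgroup G) (p : Fin n → ℕ),
    c 0 = ⊥ ∧ c (Fin.last n) = ⊤ ∧
    (∀ i, (c i).Normal) ∧
    (∀ i : Fin n, c i.castSucc ≤ c i.succ) ∧
    (∀ i, (p i).Prime) ∧
    (∀ i j : Fin n, i < j → p j < p i) ∧
    (∀ q : ℕ, q.Prime → q ∣ Nat.card G → ∃ i, p i = q) ∧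
    (∀ i : Fin n,
      Nat.card (c i.succ) = Nat.card (c i.castSucc) * p i ^ (Nat.card G).factorization (p i))


section MainAux
open scoped Pointwise
universe u

lemma le_pCore {p : ℕ} {G : Type*} [Group G] {N : Subgroup G}
    (h1 : N.Normal) (h2 : IsPGroup p N) : N ≤ pCore p G := le_sSup ⟨h1, h2⟩

open scoped Classical in
lemma pCore_mem (p : ℕ) (G : Type*) [Group G] [Finite G] :
    (pCore p G).Normal ∧ IsPGroup p ↥(pCore p G) := by
  have key : ∀ t : Finset (Subgroup G),
      (∀ x ∈ t, x ∈ {N : Subgroup G | N.Normal ∧ IsPGroup p N}) →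
      (t.sup id).Normal ∧ IsPGroup p ↥(t.sup id) := by
    intro t
    induction t using Finset.induction_on with
    | empty =>
      intro _
      simp only [Finset.sup_empty]
      exact ⟨inferInstance, IsPGroup.of_bot⟩
    | insert a s hns ih =>
      intro hmem
      rw [Finset.sup_insert]
      simp only [id_eq]
      have h1 := hmem _ (Finset.mem_insert_self _ _)
      have h2 := ih fun x hx => hmem x (Finset.mem_insert_of_mem hx)
      haveI := h2.1
      haveI := h1.1
      refine ⟨?_, h1.2.to_sup_of_normal_right h2.2⟩
      exact Subgroup.sup_normal _ _
  have hfin : {N : Subgroup G | N.Normal ∧ IsPGroup p N}.Finite := Set.toFinite _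
  have heq : pCore p G = hfin.toFinset.sup id := by
    rw [Finset.sup_id_eq_sSup, hfin.coe_toFinset, pCore]
  rw [heq]
  exact key _ (by simpa using fun x hx => hx)

lemma normal_of_subgroupOf_top {G : Type*} [Group G] {N : Subgroup G}
    (h : (N.subgroupOf ⊤).Normal) : N.Normal := by
  constructor
  intro x hx g
  have := h.conj_mem ⟨x, trivial⟩ (by simpa [Subgroup.mem_subgroupOf] using hx) ⟨g, trivial⟩
  simpa [Subgroup.mem_subgroupOf] using this

lemma subgroupOf_subgroupOf_normal {G : Type*} [Group G] {H K N : Subgroup G}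
    (hK : K ≤ N) (h : (H.subgroupOf K).Normal) :
    ((H.subgroupOf N).subgroupOf (K.subgroupOf N)).Normal := by
  constructor
  rintro ⟨⟨x, hxN⟩, hxK⟩ hx ⟨⟨g, hgN⟩, hgK⟩
  simp only [Subgroup.mem_subgroupOf] at hx hxK hgK ⊢
  have := h.conj_mem ⟨x, hxK⟩ (by simpa [Subgroup.mem_subgroupOf] using hx) ⟨g, hgK⟩
  simpa [Subgroup.mem_subgroupOf] using this

lemma chain_mono {G : Type*} [Group G] {n : ℕ} {c : Fin (n + 1) → Subgroup G}
    (h : ∀ i : Fin n, c i.castSucc ≤ c i.succ) : Monotone c := by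
  have : ∀ i : Fin n, c i.castSucc ≤ c i.succ := h
  exact Fin.monotone_iff_le_succ.mpr (by
    intro i
    simpa using h i)

lemma map_pCore_normal {p : ℕ} {G : Type*} [Group G] [Finite G] {N : Subgroup G}
    (hN : N.Normal) : ((pCore p ↥N).map N.subtype).Normal := by
  haveI := hN
  constructor
  rintro x hx g
  obtain ⟨y, hy, rfl⟩ := hx
  have hle : (pCore p ↥N).map (MulAut.conjNormal g).toMonoidHom ≤ pCore p ↥N :=
    le_pCore ((pCore_mem p ↥N).1.map _ (MulAut.conjNormal g).surjective)
      ((pCore_mem p ↥N).2.map _)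
  have hmem : (MulAut.conjNormal g) y ∈ pCore p ↥N :=
    hle ⟨y, hy, rfl⟩
  exact ⟨_, hmem, by simp [MulAut.conjNormal_apply]⟩

lemma pgroup_subnormal_le_pCore_aux (p : ℕ) : ∀ (n : ℕ) (G : Type u) [Group G] [Finite G]
    (P : Subgroup G) (c : Fin (n + 1) → Subgroup G), IsPGroup p ↥P →
    c 0 = P → c (Fin.last n) = ⊤ →
    (∀ i : Fin n, c i.castSucc ≤ c i.succ ∧ ((c i.castSucc).subgroupOf (c i.succ)).Normal) →
    P ≤ pCore p G := by
  intro n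
  induction n with
  | zero =>
    intro G _ _ P c hP hc0 hct _
    have : P = ⊤ := by rw [← hc0, show (0 : Fin 1) = Fin.last 0 from rfl, hct]
    subst this
    exact le_pCore inferInstance hP
  | succ n IH =>
    intro G _ _ P c hP hc0 hct hstep
    set N : Subgroup G := c (Fin.last n).castSucc with hNdef
    have hstepTop := hstep (Fin.last n)
    have hNnorm : N.Normal := by
      apply normal_of_subgroupOf_top
      have : (Fin.last n).succ = Fin.last (n + 1) := Fin.succ_last n
      rw [← hct, ← this]
      exact hstepTop.2
    have hmono : Monotone c := chain_mono (fun i => (hstep i).1)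
    have hPN : P ≤ N := by
      rw [← hc0]
      exact hmono (by simp [Fin.le_def])
    -- restricted chain in N
    set c' : Fin (n + 1) → Subgroup ↥N := fun k => (c k.castSucc).subgroupOf N with hc'def
    have hc'0 : c' 0 = P.subgroupOf N := by
      simp only [hc'def]
      rw [show ((0 : Fin (n+1)).castSucc) = (0 : Fin (n+2)) from rfl, hc0]
    have hc't : c' (Fin.last n) = ⊤ := by
      simp only [hc'def]
      exact Subgroup.subgroupOf_self N
    have hc'step : ∀ i : Fin n, c' i.castSucc ≤ c' i.succ ∧
        ((c' i.castSucc).subgroupOf (c' i.succ)).Normal := by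
      intro i
      have hcs : (i.succ).castSucc = (i.castSucc).succ := (Fin.succ_castSucc i).symm
      have horig := hstep i.castSucc
      have hle2 : c (i.castSucc).succ ≤ N := by
        apply hmono
        simp [Fin.le_def]
      constructor
      · simp only [hc'def, hcs]
        exact fun x hx => horig.1 hx
      · simp only [hc'def, hcs]
        exact subgroupOf_subgroupOf_normal hle2 horig.2
    have hP' : IsPGroup p ↥(P.subgroupOf N) :=
      hP.comap_of_ker_isPGroup N.subtype (by
        rw [Subgroup.ker_subtype]; exact IsPGroup.of_bot)
    have hPle : P.subgroupOf N ≤ pCore p ↥N :=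
      IH ↥N (P.subgroupOf N) c' hP' hc'0 hc't hc'step
    have hKnorm : ((pCore p ↥N).map N.subtype).Normal := map_pCore_normal hNnorm
    have hKp : IsPGroup p ↥((pCore p ↥N).map N.subtype) := (pCore_mem p ↥N).2.map _
    refine le_trans ?_ (le_pCore hKnorm hKp)
    intro x hx
    exact ⟨⟨x, hPN hx⟩, hPle (by simpa [Subgroup.mem_subgroupOf] using hx), rfl⟩

lemma pgroup_subnormal_le_pCore {p : ℕ} {G : Type u} [Group G] [Finite G]
    {P : Subgroup G} (hP : IsPGroup p ↥P) (hsub : P.IsSubnormal') : P ≤ pCore p G := by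
  obtain ⟨n, c, hc0, hct, hstep⟩ := hsub
  exact pgroup_subnormal_le_pCore_aux p n G P c hP hc0 hct hstep

lemma IsSupersolvable.quotient {G : Type*} [Group G] (hss : IsSupersolvable G)
    (N : Subgroup G) [N.Normal] : IsSupersolvable (G ⧸ N) := by
  obtain ⟨n, c, hc0, hct, hnorm, hstep⟩ := hss
  refine ⟨n, fun i => (c i).map (QuotientGroup.mk' N), ?_, ?_, ?_, ?_⟩
  · show Subgroup.map (QuotientGroup.mk' N) (c 0) = ⊥
    rw [hc0]; exact Subgroup.map_bot _
  · show Subgroup.map (QuotientGroup.mk' N) (c (Fin.last n)) = ⊤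
    rw [hct]; exact Subgroup.map_top_of_surjective _ (QuotientGroup.mk'_surjective N)
  · exact fun i => (hnorm i).map _ (QuotientGroup.mk'_surjective N)
  · intro i
    obtain ⟨hle, g, hg, hgen⟩ := hstep i
    refine ⟨Subgroup.map_mono hle, QuotientGroup.mk' N g, ⟨g, hg, rfl⟩, ?_⟩
    have := Subgroup.map_mono (f := QuotientGroup.mk' N) hgen
    rwa [Subgroup.map_sup, MonoidHom.map_zpowers] at this

lemma exists_normal_prime_order {G : Type*} [Group G] [Finite G] [Nontrivial G]
    (hss : IsSupersolvable G) :
    ∃ (q : ℕ) (h : G), q.Prime ∧ orderOf h = q ∧ (Subgroup.zpowers h).Normal := by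
  classical
  obtain ⟨n, c, hc0, hct, hnorm, hstep⟩ := hss
  have hex : ∃ k : ℕ, ∃ hk : k ≤ n, c ⟨k, Nat.lt_succ_of_le hk⟩ ≠ ⊥ := by
    refine ⟨n, le_refl n, ?_⟩
    have : c ⟨n, Nat.lt_succ_of_le (le_refl n)⟩ = ⊤ := by
      convert hct using 2
      rfl
    rw [this]
    intro h
    obtain ⟨x, hx⟩ := exists_ne (1 : G)
    exact hx (by simpa using (h ▸ Subgroup.mem_top x : x ∈ (⊥ : Subgroup G)))
  obtain ⟨m, ⟨hmn, hmne⟩, hmmin⟩ :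
      ∃ m, (∃ hk : m ≤ n, c ⟨m, Nat.lt_succ_of_le hk⟩ ≠ ⊥) ∧
        ∀ k, k < m → ¬ ∃ hk : k ≤ n, c ⟨k, Nat.lt_succ_of_le hk⟩ ≠ ⊥ :=
    ⟨Nat.find hex, Nat.find_spec hex, fun k hk => Nat.find_min hex hk⟩
  have hm0 : m ≠ 0 := by
    intro h
    apply hmne
    have : (⟨m, Nat.lt_succ_of_le hmn⟩ : Fin (n+1)) = 0 := by
      simp [h, Fin.ext_iff]
    rw [this, hc0]
  obtain ⟨m', rfl⟩ : ∃ m', m = m' + 1 := ⟨m - 1, by omega⟩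
  have hm'n : m' < n := by omega
  have hbot : c ⟨m', by omega⟩ = ⊥ := by
    by_contra hne
    exact hmmin m' (by omega) ⟨by omega, hne⟩
  set i : Fin n := ⟨m', hm'n⟩ with hi
  have hics : (i.castSucc : Fin (n+1)) = ⟨m', by omega⟩ := rfl
  have hisc : (i.succ : Fin (n+1)) = ⟨m' + 1, by omega⟩ := rfl
  obtain ⟨hle, g, hg, hgen⟩ := hstep i
  have hC : c i.succ = Subgroup.zpowers g := by
    apply le_antisymm
    · refine le_trans hgen ?_
      rw [hics, hbot, bot_sup_eq]
    · exact (Subgroup.zpowers_le).mpr hg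
  have hCne : c i.succ ≠ ⊥ := by
    rw [hisc]
    exact hmne
  have hg1 : g ≠ 1 := by
    intro h
    apply hCne
    rw [hC, h, Subgroup.zpowers_one_eq_bot]
  set d := orderOf g with hd
  have hd1 : d ≠ 1 := by simpa [hd, orderOf_eq_one_iff] using hg1
  have hq : d.minFac.Prime := Nat.minFac_prime hd1
  set q := d.minFac with hqdef
  have hd0 : d ≠ 0 := by
    have : orderOf g ≠ 0 := (orderOf_pos g).ne'
    simpa [hd]
  refine ⟨q, g ^ (d / q), hq, ?_, ?_⟩
  · rw [orderOf_pow]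
    rw [← hd, Nat.gcd_eq_right (Nat.div_dvd_of_dvd (Nat.minFac_dvd d)), Nat.div_div_self (Nat.minFac_dvd d) hd0]
  · constructor
    intro x hx γ
    obtain ⟨k, rfl⟩ := hx
    have hCnorm : (c i.succ).Normal := hnorm i.succ
    have hγg : γ * g * γ⁻¹ ∈ Subgroup.zpowers g := by
      rw [← hC]; exact hCnorm.conj_mem g (hC ▸ Subgroup.mem_zpowers g) γ
    obtain ⟨j, hj⟩ := hγg
    have key : γ * (g ^ (d / q)) * γ⁻¹ ∈ Subgroup.zpowers (g ^ (d / q)) := by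
      have : γ * (g ^ (d / q)) * γ⁻¹ = (γ * g * γ⁻¹) ^ (d / q) := by
        rw [conj_pow]
      rw [this, ← hj]
      refine ⟨j, ?_⟩
      show (g ^ (d / q)) ^ j = (g ^ j) ^ (d / q)
      simp only [← zpow_natCast, ← zpow_mul]
      rw [mul_comm]
    have : γ * (g ^ (d / q)) ^ k * γ⁻¹ = (γ * (g ^ (d / q)) * γ⁻¹) ^ k := by
      rw [conj_zpow]
    rw [this]
    exact Subgroup.zpow_mem _ key k

lemma commute_of_pelem {G : Type*} [Group G] {p q : ℕ} (hp : p.Prime) (hq : q.Prime)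
    (hlt : q < p) {h : G} (hh : orderOf h = q) (hN : (Subgroup.zpowers h).Normal)
    {x : G} (hx : ∃ a : ℕ, x ^ p ^ a = 1) : Commute x h := by
  obtain ⟨a, hxa⟩ := hx
  obtain ⟨k, hk⟩ := hN.conj_mem h (Subgroup.mem_zpowers h) x
  have hk' : x * h * x⁻¹ = h ^ k := hk.symm
  have iter : ∀ m : ℕ, x ^ m * h * (x ^ m)⁻¹ = h ^ (k ^ m) := by
    intro m
    induction m with
    | zero => simp
    | succ m ih =>
      have e : x ^ (m+1) * h * (x ^ (m+1))⁻¹ = x * (x ^ m * h * (x ^ m)⁻¹) * x⁻¹ := by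
        group
      rw [e, ih, ← conj_zpow, hk', ← zpow_mul, pow_succ, mul_comm k (k ^ m)]
  have heq : h ^ (k ^ (p ^ a)) = h := by
    have h5 := iter (p ^ a)
    rw [hxa, one_mul, inv_one, mul_one] at h5
    exact h5.symm
  haveI : NeZero q := ⟨hq.ne_zero⟩
  haveI : Fact q.Prime := ⟨hq⟩
  -- pass to ZMod q
  have hcast : ((k : ZMod q)) ^ (p ^ a) = 1 := by
    have h1 : h ^ (k ^ (p ^ a) - 1) = 1 := by
      rw [zpow_sub, heq, zpow_one, mul_inv_cancel]
    have h2 : ((q : ℤ)) ∣ (k ^ (p ^ a) - 1) := by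
      rw [← hh]
      exact orderOf_dvd_iff_zpow_eq_one.mpr h1
    have h3 : ((k ^ (p ^ a) - 1 : ℤ) : ZMod q) = 0 :=
      (ZMod.intCast_zmod_eq_zero_iff_dvd _ q).mpr h2
    push_cast at h3
    linear_combination h3
  have hk1 : (k : ZMod q) = 1 := by
    have hpa1 : p ^ a - 1 + 1 = p ^ a := Nat.sub_add_cancel (Nat.one_le_iff_ne_zero.mpr (pow_ne_zero _ hp.pos.ne'))
    have hunit : IsUnit ((k : ZMod q)) := IsUnit.of_mul_eq_one ((k : ZMod q) ^ (p ^ a - 1)) (by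
      rw [← pow_succ', hpa1]; exact hcast)
    set u := hunit.unit with hu
    have hu1 : (u : ZMod q) = (k : ZMod q) := hunit.unit_spec
    have hupow : u ^ (p ^ a) = 1 := by
      ext
      push_cast
      rw [hu1, hcast]
    have hdvd1 : orderOf u ∣ p ^ a := orderOf_dvd_of_pow_eq_one hupow
    have hdvd2 : orderOf u ∣ q - 1 := by
      have h6 := orderOf_dvd_card (x := u)
      rwa [ZMod.card_units_eq_totient, Nat.totient_prime hq] at h6
    obtain ⟨j, hj⟩ := (Nat.dvd_prime_pow hp).mp hdvd1
    have hj0 : j = 0 := by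
      by_contra hj0
      have : p ∣ q - 1 := dvd_trans (dvd_pow_self p hj0) (hj.2 ▸ hdvd2)
      have h2q := hq.two_le
      have hle := Nat.le_of_dvd (by omega) this
      omega
    have : orderOf u = 1 := by rw [hj.2, hj0, pow_zero]
    have : u = 1 := orderOf_eq_one_iff.mp this
    rw [← hu1, this, Units.val_one]
  -- conclude h ^ k = h
  have : h ^ k = h := by
    have : ((k - 1 : ℤ) : ZMod q) = 0 := by push_cast; rw [hk1]; ring
    have hdvd : ((q : ℤ)) ∣ (k - 1) := (ZMod.intCast_zmod_eq_zero_iff_dvd _ q).mp this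
    have h7 : h ^ (k - 1) = 1 := orderOf_dvd_iff_zpow_eq_one.mp (by rw [hh]; exact hdvd)
    calc h ^ k = h ^ (k - 1) * h ^ (1 : ℤ) := by rw [← zpow_add]; ring_nf
    _ = h := by rw [h7, one_mul, zpow_one]
  have hfix : x * h * x⁻¹ = h := hk'.trans this
  show x * h = h * x
  calc x * h = (x * h * x⁻¹) * x := by group
    _ = h * x := by rw [hfix]

lemma sylow_normal_of_supersolvable (p : ℕ) (hp : p.Prime) :
    ∀ (n : ℕ), ∀ (G : Type u) [Group G] [Finite G], Nat.card G = n →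
      IsSupersolvable G → (∀ q : ℕ, q.Prime → q ∣ Nat.card G → q ≤ p) →
      ∀ P : Sylow p G, (P : Subgroup G).Normal := by
  haveI := Fact.mk hp
  intro n
  induction n using Nat.strong_induction_on with
  | _ n IH =>
  intro G _ _ hcard hss hmax P
  rcases subsingleton_or_nontrivial G with hGs | hGn
  · constructor
    intro x hx g
    have hx1 : g * x * g⁻¹ = x := Subsingleton.elim _ _
    rwa [hx1]
  · obtain ⟨q, h, hq, hh, hN⟩ := exists_normal_prime_order hss
    haveI := hN
    set N := Subgroup.zpowers h with hNdef
    have hcardN : Nat.card N = q := by rw [Nat.card_zpowers, hh]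
    have hqle : q ≤ p := hmax q hq (by rw [← hh]; exact orderOf_dvd_natCard h)
    have hcardQ : Nat.card G = Nat.card (G ⧸ N) * q := by
      rw [← hcardN]; exact Subgroup.card_eq_card_quotient_mul_card_subgroup N
    have hQlt : Nat.card (G ⧸ N) < n := by
      have h1 : 0 < Nat.card (G ⧸ N) := Nat.card_pos
      have h2 := hq.two_le
      rw [← hcard, hcardQ]
      exact (Nat.lt_mul_iff_one_lt_right h1).mpr (by omega)
    have hssQ : IsSupersolvable (G ⧸ N) := hss.quotient N
    have hmaxQ : ∀ r : ℕ, r.Prime → r ∣ Nat.card (G ⧸ N) → r ≤ p := by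
      intro r hr hd
      exact hmax r hr (hd.trans ⟨q, hcardQ⟩)
    have hPbar := IH _ hQlt (G ⧸ N) rfl hssQ hmaxQ
      (P.mapSurjective (QuotientGroup.mk'_surjective N))
    rw [Sylow.coe_mapSurjective] at hPbar
    rcases eq_or_ne q p with rfl | hqp
    · -- q = p : N ≤ P, so P is the comap of its image
      have hNp : IsPGroup q ↥N := IsPGroup.of_card (by rw [hcardN, pow_one])
      have hNleP : N ≤ (P : Subgroup G) := by
        obtain ⟨Q, hNQ⟩ := hNp.exists_le_sylow
        obtain ⟨g, hg⟩ := MulAction.exists_smul_eq G Q P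
        intro x hx
        have hx' : g⁻¹ * x * g ∈ (Q : Subgroup G) := by
          have := hN.conj_mem x hx g⁻¹
          simpa using hNQ (by simpa using this)
        rw [← hg]
        have : x ∈ (MulAut.conj g) • (Q : Subgroup G) := by
          rw [Subgroup.mem_pointwise_smul_iff_inv_smul_mem]
          simpa [MulAut.smul_def] using hx'
        rw [Sylow.coe_subgroup_smul] at *
        exact this
      have hkey : ((P : Subgroup G).map (QuotientGroup.mk' N)).comap (QuotientGroup.mk' N)
          = (P : Subgroup G) := by
        rw [Subgroup.comap_map_eq, QuotientGroup.ker_mk', sup_eq_left.mpr hNleP]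
      rw [← hkey]
      exact hPbar.comap _
    · have hqlt : q < p := lt_of_le_of_ne hqle hqp
      have hcomm : ∀ x ∈ (P : Subgroup G), ∀ y ∈ N, Commute x y := by
        intro x hx y hy
        obtain ⟨k, rfl⟩ := hy
        have hxp : ∃ a : ℕ, x ^ p ^ a = 1 := by
          obtain ⟨a, ha⟩ := P.2 ⟨x, hx⟩
          exact ⟨a, by simpa [← Subtype.ext_iff] using congrArg Subtype.val ha⟩
        exact (commute_of_pelem hp hq hqlt hh hN hxp).zpow_right k
      set H := (P : Subgroup G) ⊔ N with hHdef
      have hHeq : ((P : Subgroup G).map (QuotientGroup.mk' N)).comap (QuotientGroup.mk' N)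
          = H := by
        rw [Subgroup.comap_map_eq, QuotientGroup.ker_mk']
      have hHnorm : H.Normal := hHeq ▸ hPbar.comap _
      have hPH : (P : Subgroup G) ≤ H := le_sup_left
      have hPsub : ((P : Subgroup G).subgroupOf H).Normal := by
        constructor
        rintro ⟨x, hxH⟩ hx ⟨g, hgH⟩
        rw [Subgroup.mem_subgroupOf] at hx ⊢
        have hg' : g ∈ ((P : Subgroup G) : Set G) * (N : Set G) := by
          rw [← Subgroup.mul_normal]; exact hgH
        obtain ⟨y, hy, n', hn', rfl⟩ := hg'
        show (y * n') * x * (y * n')⁻¹ ∈ (P : Subgroup G)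
        have hco : n' * x * n'⁻¹ = x := by
          have := (hcomm x hx n' hn').symm
          rw [Commute, SemiconjBy] at this
          rw [this]; group
        have : (y * n') * x * (y * n')⁻¹ = y * (n' * x * n'⁻¹) * y⁻¹ := by group
        rw [this, hco]
        exact Subgroup.mul_mem _ (Subgroup.mul_mem _ hy hx) (Subgroup.inv_mem _ hy)
      set P' : Sylow p ↥H := P.subtype hPH with hP'def
      have hP'norm : (P' : Subgroup ↥H).Normal := by
        rw [hP'def, Sylow.coe_subtype]
        exact hPsub
      haveI hUniq := Sylow.unique_of_normal P' hP'norm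
      constructor
      intro x hx g
      set Pg := (P : Subgroup G).map (MulAut.conj g).toMonoidHom with hPgdef
      have hPgle : Pg ≤ (P : Subgroup G) := by
        have hPgH : Pg ≤ H := by
          rintro _ ⟨z, hz, rfl⟩
          simpa [MulAut.conj_apply] using hHnorm.conj_mem z (hPH hz) g
        have hPgp : IsPGroup p ↥Pg := P.2.map _
        have hsubp : IsPGroup p ↥(Pg.subgroupOf H) :=
          hPgp.comap_of_ker_isPGroup H.subtype
            (by rw [Subgroup.ker_subtype]; exact IsPGroup.of_bot)
        obtain ⟨Q', hQ'⟩ := hsubp.exists_le_sylow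
        have hQP : Q' = P' := Subsingleton.elim _ _
        rw [hQP, hP'def, Sylow.coe_subtype] at hQ'
        intro y hy
        have hmem : (⟨y, hPgH hy⟩ : ↥H) ∈ Pg.subgroupOf H := by
          rwa [Subgroup.mem_subgroupOf]
        have := hQ' hmem
        rwa [Subgroup.mem_subgroupOf] at this
      exact hPgle ⟨x, hx, by simp [MulAut.conj_apply]⟩

end MainAux

/-- If `G = ⟨A, B⟩` with `A`, `B` subnormal supersoluble and `p` is the largest
prime dividing `|G|`, then `⟨A_p, B_p⟩ ≤ O_p(G)` for Sylow `p`-subgroups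
`A_p ≤ A`, `B_p ≤ B`. -/
theorem stmt_10 {G : Type*} [Group G] [Finite G] (A B : Subgroup G)
    (hA : A.IsSubnormal') (hB : B.IsSubnormal')
    (hAs : IsSupersolvable A) (hBs : IsSupersolvable B)
    (hgen : A ⊔ B = ⊤)
    (p : ℕ) (hp : p.Prime) (hdvd : p ∣ Nat.card G)
    (hmax : ∀ q : ℕ, q.Prime → q ∣ Nat.card G → q ≤ p)
    (Ap : Sylow p A) (Bp : Sylow p B) :
    ((Ap : Subgroup A).map A.subtype) ⊔ ((Bp : Subgroup B).map B.subtype) ≤ pCore p G := by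
  haveI := Fact.mk hp
  have key : ∀ (C : Subgroup G), C.IsSubnormal' → IsSupersolvable ↥C →
      ∀ Cp : Sylow p ↥C, (Cp : Subgroup ↥C).map C.subtype ≤ pCore p G := by
    intro C hCsub hCss Cp
    have hmaxC : ∀ q : ℕ, q.Prime → q ∣ Nat.card ↥C → q ≤ p :=
      fun q hq hd => hmax q hq (hd.trans C.card_subgroup_dvd_card)
    have hCpnorm : (Cp : Subgroup ↥C).Normal :=
      sylow_normal_of_supersolvable p hp (Nat.card ↥C) ↥C rfl hCss hmaxC Cp
    set Pg := (Cp : Subgroup ↥C).map C.subtype with hPgdef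
    have hPgp : IsPGroup p ↥Pg := Cp.2.map _
    have hPgsub : Pg.IsSubnormal' := by
      obtain ⟨n, c, hc0, hct, hstep⟩ := hCsub
      refine ⟨n + 1, fun i => Fin.cases (motive := fun _ => Subgroup G) Pg c i, Fin.cases_zero .., ?_, ?_⟩
      · show Fin.cases (motive := fun _ => Subgroup G) Pg c (Fin.last (n + 1)) = ⊤
        rw [show (Fin.last (n + 1)) = (Fin.last n).succ from (Fin.succ_last n).symm,
          Fin.cases_succ, hct]
      · intro i
        induction i using Fin.cases with
        | zero =>
          constructor
          · show Fin.cases (motive := fun _ => Subgroup G) Pg c ((0 : Fin (n + 1)).castSucc) ≤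
              Fin.cases (motive := fun _ => Subgroup G) Pg c ((0 : Fin (n + 1)).succ)
            rw [Fin.castSucc_zero, Fin.cases_zero, Fin.cases_succ, hc0]
            exact Subgroup.map_subtype_le _
          · show ((Fin.cases (motive := fun _ => Subgroup G) Pg c ((0 : Fin (n + 1)).castSucc) : Subgroup G).subgroupOf
              (Fin.cases (motive := fun _ => Subgroup G) Pg c ((0 : Fin (n + 1)).succ))).Normal
            rw [Fin.castSucc_zero, Fin.cases_zero, Fin.cases_succ, hc0]
            have hPgC : Pg.subgroupOf C = (Cp : Subgroup ↥C) := by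
              rw [Subgroup.subgroupOf, hPgdef,
                Subgroup.comap_map_eq_self_of_injective C.subtype_injective]
            rw [hPgC]
            exact hCpnorm
        | succ j =>
          constructor
          · show Fin.cases (motive := fun _ => Subgroup G) Pg c (j.succ.castSucc) ≤ Fin.cases (motive := fun _ => Subgroup G) Pg c (j.succ.succ)
            rw [← Fin.succ_castSucc, Fin.cases_succ, Fin.cases_succ]
            exact (hstep j).1
          · show ((Fin.cases (motive := fun _ => Subgroup G) Pg c (j.succ.castSucc) : Subgroup G).subgroupOf
              (Fin.cases (motive := fun _ => Subgroup G) Pg c (j.succ.succ))).Normal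
            rw [← Fin.succ_castSucc, Fin.cases_succ, Fin.cases_succ]
            exact (hstep j).2
    exact pgroup_subnormal_le_pCore hPgp hPgsub
  exact sup_le (key A hA hAs Ap) (key B hB hBs Bp)
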